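/- For each nonempty finite set U, there is a bijection between pairs (T₀, T) where T is a rooted tree on U and T₀ is a rooted subtree of T (sharing T's root), and triples (T₀, F₁, φ) where T₀ is a rooted tree on a subset U₀ ⊆ U containing at least the root, F₁ is a forest of rooted trees on U₁ = U \ U₀, and φ is a function from the set of trees (blocks) of F₁ to U₀. -/

import Mathlib

/-- Restriction of a parent function to a set `A` (identity outside `A`), used to normalize
trees and forests living on subsets. -/
def restrictFun (n : ℕ) (p : Fin n → Fin n) (A : Finset (Fin n)) : Fin n → Fin n :=
  fun i => if i ∈ A then p i else i

/-- A labeled rooted tree on the subset `S` of `Fin n`: root `rp.1 ∈ S`, parent function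
`rp.2` mapping `S` into `S`, normalized to be the identity off `S ∖ {root}`, with every
vertex of `S` reaching the root. -/
def IsTreeOn (n : ℕ) (S : Finset (Fin n)) (rp : Fin n × (Fin n → Fin n)) : Prop :=
  rp.1 ∈ S ∧ (∀ i, i ∉ S.erase rp.1 → rp.2 i = i) ∧ (∀ i ∈ S, rp.2 i ∈ S) ∧
    ∀ i ∈ S, ∃ k : ℕ, rp.2^[k] i = rp.1

/-- A forest of labeled rooted trees on the subset `S` of `Fin n`, with root set `R ⊆ S` and
parent function `p` (identity off `S ∖ R`): every vertex of `S` reaches some root. -/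
def IsForestOn (n : ℕ) (S R : Finset (Fin n)) (p : Fin n → Fin n) : Prop :=
  R ⊆ S ∧ (∀ i, i ∉ S \ R → p i = i) ∧ (∀ i ∈ S, p i ∈ S) ∧
    ∀ i ∈ S, ∃ k : ℕ, p^[k] i ∈ R

private lemma iterate_congr {α : Type*} (f g : α → α) (i : α) :
    ∀ k, (∀ j < k, g (f^[j] i) = f (f^[j] i)) → g^[k] i = f^[k] i := by
  intro k
  induction k with
  | zero => intro _; rfl
  | succ k ih =>
    intro h
    rw [Function.iterate_succ_apply', Function.iterate_succ_apply',
      ih (fun j hj => h j (Nat.lt_succ_of_lt hj)), h k (Nat.lt_succ_self k)]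

section main
variable {n : ℕ}

/-- The forward map on underlying data. -/
def fwdRaw (n : ℕ) (x : (Fin n × (Fin n → Fin n)) × Finset (Fin n)) :
    Finset (Fin n) × (Fin n × (Fin n → Fin n)) ×
      (Finset (Fin n) × (Fin n → Fin n)) × (Fin n → Fin n) :=
  (x.2,
   (x.1.1, restrictFun n x.1.2 (x.2.erase x.1.1)),
   ((Finset.univ.filter fun j => j ∉ x.2 ∧ x.1.2 j ∈ x.2),
    restrictFun n x.1.2
      (x.2ᶜ \ (Finset.univ.filter fun j => j ∉ x.2 ∧ x.1.2 j ∈ x.2))),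
   restrictFun n x.1.2 (Finset.univ.filter fun j => j ∉ x.2 ∧ x.1.2 j ∈ x.2))

/-- The inverse map on underlying data. -/
def bwdRaw (n : ℕ) (y : Finset (Fin n) × (Fin n × (Fin n → Fin n)) ×
      (Finset (Fin n) × (Fin n → Fin n)) × (Fin n → Fin n)) :
    (Fin n × (Fin n → Fin n)) × Finset (Fin n) :=
  ((y.2.1.1, fun i => if i ∈ y.1 then y.2.1.2 i else
      if i ∈ y.2.2.1.1 then y.2.2.2 i else y.2.2.1.2 i), y.1)

variable {r : Fin n} {p : Fin n → Fin n} {U₀ : Finset (Fin n)}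

/-- Restriction of a tree to a parent-closed subset containing the root is a tree. -/
lemma fwd_tree (hr : r ∈ U₀) (hcl : ∀ i ∈ U₀, i ≠ r → p i ∈ U₀)
    (hreach : ∀ i, ∃ k : ℕ, p^[k] i = r) :
    IsTreeOn n U₀ (r, restrictFun n p (U₀.erase r)) := by
  refine ⟨hr, fun i hi => if_neg hi, ?_, ?_⟩
  · intro i hi
    by_cases h : i ∈ U₀.erase r
    · simp only [restrictFun]
      rw [if_pos h]
      exact hcl i hi (Finset.mem_erase.1 h).1
    · simp only [restrictFun]; rw [if_neg h]; exact hi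
  · intro i hi
    have hex := hreach i
    set k := Nat.find hex with hk
    have hspec : p^[k] i = r := Nat.find_spec hex
    have hmem : ∀ j, j ≤ k → p^[j] i ∈ U₀ := by
      intro j
      induction j with
      | zero => intro _; exact hi
      | succ j ih =>
        intro hj
        have h1 : p^[j] i ∈ U₀ := ih (Nat.le_of_succ_le hj)
        have h2 : p^[j] i ≠ r := fun h => Nat.find_min hex (Nat.lt_of_succ_le hj) h
        rw [Function.iterate_succ_apply']
        exact hcl _ h1 h2
    refine ⟨k, ?_⟩
    have := iterate_congr p (restrictFun n p (U₀.erase r)) i k (fun j hj => by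
      have h1 : p^[j] i ∈ U₀.erase r :=
        Finset.mem_erase.2 ⟨fun h => Nat.find_min hex hj h, hmem j (le_of_lt hj)⟩
      simp only [restrictFun, if_pos h1])
    rw [this, hspec]

/-- The difference is a forest on the complement with the attaching vertices as roots. -/
lemma fwd_forest (hr : r ∈ U₀) (hreach : ∀ i, ∃ k : ℕ, p^[k] i = r) :
    IsForestOn n U₀ᶜ (Finset.univ.filter fun j => j ∉ U₀ ∧ p j ∈ U₀)
      (restrictFun n p (U₀ᶜ \ Finset.univ.filter fun j => j ∉ U₀ ∧ p j ∈ U₀)) := by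
  set R := Finset.univ.filter fun j => j ∉ U₀ ∧ p j ∈ U₀ with hR
  have hRmem : ∀ j, j ∈ R ↔ j ∉ U₀ ∧ p j ∈ U₀ := by
    intro j; simp [hR]
  refine ⟨fun j hj => Finset.mem_compl.2 ((hRmem j).1 hj).1, fun i hi => if_neg hi, ?_, ?_⟩
  · intro i hi
    by_cases h : i ∈ U₀ᶜ \ R
    · simp only [restrictFun]
      rw [if_pos h]
      rcases Finset.mem_sdiff.1 h with ⟨h1, h2⟩
      refine Finset.mem_compl.2 fun hc => ?_
      exact h2 ((hRmem i).2 ⟨Finset.mem_compl.1 h1, hc⟩)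
    · simp only [restrictFun]; rw [if_neg h]; exact hi
  · intro i hi
    have hiU : i ∉ U₀ := Finset.mem_compl.1 hi
    have hex : ∃ k : ℕ, p^[k] i ∈ U₀ := by
      obtain ⟨k, hk⟩ := hreach i
      exact ⟨k, hk ▸ hr⟩
    set k := Nat.find hex with hk
    have hspec : p^[k] i ∈ U₀ := Nat.find_spec hex
    have hkpos : 0 < k := by
      rcases Nat.eq_zero_or_pos k with h | h
      · exfalso; apply hiU; rw [h] at hspec; simpa using hspec
      · exact h
    obtain ⟨m, hm⟩ := Nat.exists_eq_succ_of_ne_zero (Nat.pos_iff_ne_zero.1 hkpos)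
    refine ⟨m, ?_⟩
    have hiter := iterate_congr p (restrictFun n p (U₀ᶜ \ R)) i m (fun j hj => by
      have hjk : j < k := by omega
      have h1 : p^[j] i ∉ U₀ := fun h => Nat.find_min hex hjk h
      have h2 : p^[j] i ∉ R := by
        intro h
        have := ((hRmem _).1 h).2
        rw [← Function.iterate_succ_apply' p j i] at this
        exact Nat.find_min hex (by omega) this
      simp only [restrictFun, if_pos (Finset.mem_sdiff.2 ⟨Finset.mem_compl.2 h1, h2⟩)])
    rw [hiter]
    refine (hRmem _).2 ⟨fun h => Nat.find_min hex (by omega) h, ?_⟩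
    rw [← Function.iterate_succ_apply' p m i, ← hm]
    exact hspec

variable {p₀ q φ : Fin n → Fin n} {R : Finset (Fin n)}

/-- The reassembled parent function of the inverse map. -/
lemma bwd_tree (ht : IsTreeOn n U₀ (r, p₀)) (hf : IsForestOn n U₀ᶜ R q)
    (hφ : ∀ i ∈ R, φ i ∈ U₀) :
    IsTreeOn n Finset.univ
      (r, fun i => if i ∈ U₀ then p₀ i else if i ∈ R then φ i else q i) := by
  obtain ⟨hrU, hnorm₀, hmap₀, hreach₀⟩ := ht
  obtain ⟨hRsub, hnormq, hmapq, hreachq⟩ := hf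
  set p : Fin n → Fin n := fun i => if i ∈ U₀ then p₀ i else if i ∈ R then φ i else q i
    with hp
  have hreachU : ∀ i ∈ U₀, ∃ k : ℕ, p^[k] i = r := by
    intro i hi
    obtain ⟨k, hk⟩ := hreach₀ i hi
    have hmem : ∀ j, p₀^[j] i ∈ U₀ := by
      intro j
      induction j with
      | zero => exact hi
      | succ j ih => rw [Function.iterate_succ_apply']; exact hmap₀ _ ih
    refine ⟨k, ?_⟩
    rw [iterate_congr p₀ p i k (fun j _ => by simp only [hp, if_pos (hmem j)])]
    exact hk
  refine ⟨Finset.mem_univ r, ?_, fun i _ => Finset.mem_univ _, ?_⟩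
  · intro i hi
    have : i = r := by
      by_contra h
      exact hi (Finset.mem_erase.2 ⟨h, Finset.mem_univ i⟩)
    subst this
    simp only [hp, if_pos hrU]
    exact hnorm₀ i (by simp)
  · intro i _
    by_cases hiU : i ∈ U₀
    · exact hreachU i hiU
    · have hic : i ∈ U₀ᶜ := Finset.mem_compl.2 hiU
      have hex : ∃ k : ℕ, q^[k] i ∈ R := hreachq i hic
      set k := Nat.find hex with hkdef
      have hspec : q^[k] i ∈ R := Nat.find_spec hex
      have hmem : ∀ j, j ≤ k → q^[j] i ∈ U₀ᶜ := by
        intro j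
        induction j with
        | zero => intro _; exact hic
        | succ j ih =>
          intro hj
          rw [Function.iterate_succ_apply']
          exact hmapq _ (ih (Nat.le_of_succ_le hj))
      have hiter := iterate_congr q p i k (fun j hj => by
        have h1 : q^[j] i ∉ U₀ := Finset.mem_compl.1 (hmem j (le_of_lt hj))
        have h2 : q^[j] i ∉ R := fun h => Nat.find_min hex hj h
        simp only [hp, if_neg h1, if_neg h2])
      have hstep : p (p^[k] i) ∈ U₀ := by
        rw [hiter]
        have h1 : q^[k] i ∉ U₀ := Finset.mem_compl.1 (hmem k le_rfl)
        simp only [hp, if_neg h1, if_pos hspec]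
        exact hφ _ hspec
      rw [← Function.iterate_succ_apply' p k i] at hstep
      obtain ⟨m, hm⟩ := hreachU _ hstep
      refine ⟨m + (k + 1), ?_⟩
      show p^[m + (k + 1)] i = r
      rw [Function.iterate_add_apply]
      exact hm

end main

/-- For each (nonempty) vertex set `Fin n` there is a bijection between pairs `(T, U₀)` of a
rooted tree `T` on `Fin n` and (the vertex set `U₀` of) a rooted subtree `T₀` of `T` sharing
its root, and triples `(T₀, F₁, φ)` of a rooted tree `T₀` on a subset `U₀` containing the
root, a forest `F₁` of rooted trees on the complement `U₁ = U ∖ U₀`, and a function `φ` from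
the trees of the forest (identified with their roots) to `U₀`.  The bijection restricts `T`
to `U₀`, takes the difference forest on `U₁`, and records for each forest tree the vertex of
`U₀` to which its root attaches in `T`. -/
theorem stmt15 (n : ℕ) (hn : 1 ≤ n) :
    ∃ e : {x : (Fin n × (Fin n → Fin n)) × Finset (Fin n) //
            IsTreeOn n Finset.univ x.1 ∧ x.1.1 ∈ x.2 ∧
              ∀ i ∈ x.2, i ≠ x.1.1 → x.1.2 i ∈ x.2}
          ≃ {y : Finset (Fin n) × (Fin n × (Fin n → Fin n)) ×
                  (Finset (Fin n) × (Fin n → Fin n)) × (Fin n → Fin n) //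
            IsTreeOn n y.1 y.2.1 ∧ IsForestOn n y.1ᶜ y.2.2.1.1 y.2.2.1.2 ∧
              (∀ i ∈ y.2.2.1.1, y.2.2.2 i ∈ y.1) ∧ ∀ i ∉ y.2.2.1.1, y.2.2.2 i = i},
      ∀ x, (e x).val =
        (x.val.2,
         (x.val.1.1, restrictFun n x.val.1.2 (x.val.2.erase x.val.1.1)),
         ((Finset.univ.filter fun j => j ∉ x.val.2 ∧ x.val.1.2 j ∈ x.val.2),
          restrictFun n x.val.1.2
            (x.val.2ᶜ \ (Finset.univ.filter fun j => j ∉ x.val.2 ∧ x.val.1.2 j ∈ x.val.2))),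
         restrictFun n x.val.1.2
           (Finset.univ.filter fun j => j ∉ x.val.2 ∧ x.val.1.2 j ∈ x.val.2)) := by
  classical
  -- forward well-definedness
  have hfwd : ∀ x : (Fin n × (Fin n → Fin n)) × Finset (Fin n),
      (IsTreeOn n Finset.univ x.1 ∧ x.1.1 ∈ x.2 ∧
        ∀ i ∈ x.2, i ≠ x.1.1 → x.1.2 i ∈ x.2) →
      (IsTreeOn n (fwdRaw n x).1 (fwdRaw n x).2.1 ∧
        IsForestOn n (fwdRaw n x).1ᶜ (fwdRaw n x).2.2.1.1 (fwdRaw n x).2.2.1.2 ∧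
        (∀ i ∈ (fwdRaw n x).2.2.1.1, (fwdRaw n x).2.2.2 i ∈ (fwdRaw n x).1) ∧
        ∀ i ∉ (fwdRaw n x).2.2.1.1, (fwdRaw n x).2.2.2 i = i) := by
    rintro ⟨⟨r, p⟩, U₀⟩ ⟨⟨_, _, _, hreach'⟩, hr, hcl⟩
    have hreach : ∀ i, ∃ k : ℕ, p^[k] i = r := fun i => hreach' i (Finset.mem_univ i)
    refine ⟨fwd_tree hr hcl hreach, fwd_forest hr hreach, ?_, ?_⟩
    · intro i hi
      simp only [fwdRaw] at hi
      simp only [fwdRaw, restrictFun]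
      rw [if_pos hi]
      exact (Finset.mem_filter.1 hi).2.2
    · intro i hi
      simp only [fwdRaw] at hi
      simp only [fwdRaw, restrictFun]
      rw [if_neg hi]
  -- backward well-definedness
  have hbwd : ∀ y : Finset (Fin n) × (Fin n × (Fin n → Fin n)) ×
        (Finset (Fin n) × (Fin n → Fin n)) × (Fin n → Fin n),
      (IsTreeOn n y.1 y.2.1 ∧ IsForestOn n y.1ᶜ y.2.2.1.1 y.2.2.1.2 ∧
        (∀ i ∈ y.2.2.1.1, y.2.2.2 i ∈ y.1) ∧ ∀ i ∉ y.2.2.1.1, y.2.2.2 i = i) →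
      (IsTreeOn n Finset.univ (bwdRaw n y).1 ∧ (bwdRaw n y).1.1 ∈ (bwdRaw n y).2 ∧
        ∀ i ∈ (bwdRaw n y).2, i ≠ (bwdRaw n y).1.1 → (bwdRaw n y).1.2 i ∈ (bwdRaw n y).2) := by
    rintro ⟨U₀, ⟨r, p₀⟩, ⟨R, q⟩, φ⟩ ⟨ht, hf, hφ, _⟩
    refine ⟨bwd_tree ht hf hφ, ht.1, ?_⟩
    intro i hi hne
    simp only [bwdRaw] at hi
    simp only [bwdRaw]
    rw [if_pos hi]
    exact ht.2.2.1 i hi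
  refine ⟨⟨fun x => ⟨fwdRaw n x.1, hfwd x.1 x.2⟩, fun y => ⟨bwdRaw n y.1, hbwd y.1 y.2⟩,
    ?_, ?_⟩, fun x => rfl⟩
  · -- left inverse
    rintro ⟨⟨⟨r, p⟩, U₀⟩, ⟨⟨_, hnorm, _, _⟩, hr, hcl⟩⟩
    apply Subtype.ext
    simp only [fwdRaw, bwdRaw]
    refine Prod.ext (Prod.ext rfl ?_) rfl
    funext i
    simp only [restrictFun]
    by_cases hiU : i ∈ U₀
    · rw [if_pos hiU]
      by_cases hir : i = r
      · subst hir
        rw [if_neg (by simp)]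
        exact (hnorm i (by simp)).symm
      · rw [if_pos (Finset.mem_erase.2 ⟨hir, hiU⟩)]
    · rw [if_neg hiU]
      by_cases hiR : i ∈ Finset.univ.filter fun j => j ∉ U₀ ∧ p j ∈ U₀
      · rw [if_pos hiR, if_pos hiR]
      · rw [if_neg hiR,
          if_pos (Finset.mem_sdiff.2 ⟨Finset.mem_compl.2 hiU, hiR⟩)]
  · -- right inverse
    rintro ⟨⟨U₀, ⟨r, p₀⟩, ⟨R, q⟩, φ⟩, ⟨⟨hrU, hnorm₀, hmap₀, _⟩,
      ⟨hRsub, hnormq, hmapq, _⟩, hφ, hφid⟩⟩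
    apply Subtype.ext
    simp only [fwdRaw, bwdRaw]
    set p : Fin n → Fin n := fun i => if i ∈ U₀ then p₀ i else if i ∈ R then φ i else q i
      with hp
    have hR : (Finset.univ.filter fun j => j ∉ U₀ ∧ p j ∈ U₀) = R := by
      ext j
      simp only [Finset.mem_filter, Finset.mem_univ, true_and]
      constructor
      · rintro ⟨hjU, hpj⟩
        by_contra hjR
        simp only [hp, if_neg hjU, if_neg hjR] at hpj
        exact Finset.mem_compl.1 (hmapq j (Finset.mem_compl.2 hjU)) hpj
      · intro hjR
        have hjU : j ∉ U₀ := Finset.mem_compl.1 (hRsub hjR)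
        refine ⟨hjU, ?_⟩
        simp only [hp, if_neg hjU, if_pos hjR]
        exact hφ j hjR
    refine Prod.ext rfl (Prod.ext (Prod.ext rfl ?_)
      (Prod.ext (Prod.ext ?_ ?_) ?_))
    · -- tree parent function
      funext i
      simp only [restrictFun]
      by_cases hi : i ∈ U₀.erase r
      · rw [if_pos hi]
        simp only [hp, if_pos (Finset.mem_erase.1 hi).2]
      · rw [if_neg hi]
        exact (hnorm₀ i hi).symm
    · exact hR
    · -- forest parent function
      funext i
      simp only [hp] at hR
      simp only [hR, restrictFun]
      by_cases hi : i ∈ U₀ᶜ \ R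
      · rw [if_pos hi]
        rcases Finset.mem_sdiff.1 hi with ⟨h1, h2⟩
        simp only [hp, if_neg (Finset.mem_compl.1 h1), if_neg h2]
      · rw [if_neg hi]
        exact (hnormq i hi).symm
    · -- φ
      funext i
      simp only [hp] at hR
      simp only [hR, restrictFun]
      by_cases hi : i ∈ R
      · rw [if_pos hi]
        simp only [hp, if_neg (Finset.mem_compl.1 (hRsub hi)), if_pos hi]
      · rw [if_neg hi]
        exact (hφid i hi).symm
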